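/- Under well-specified regression calibration (Condition 1) and a linear outcome model E[Y | X, C, z⁻ᶜ] = β₀ + β₁X + β_C C + β_z z⁻ᶜ, regressing Y on the calibrated variables X_RC and C_RC and z⁻ᶜ recovers the true coefficient: E[Y | X_RC, C_RC, z⁻ᶜ] = β₀ + β₁X_RC + β_C C_RC + β_z z⁻ᶜ, hence AEE(X_RC) = AEE(X) = β₁δ. -/

import Mathlib

open MeasureTheory ProbabilityTheory

/-- Under well-specified regression calibration (`X = X_RC + U*`,
`C = C_RC + U^{C*}` with mean-zero residuals independent of the calibrated
variables and covariates) and linear outcome model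
`Y = β₀ + β₁ X + β_C C + β_z z + ε`, regressing `Y` on the calibrated
variables recovers the true coefficients:
`E[Y | X_RC, C_RC, z] = β₀ + β₁ X_RC + β_C C_RC + β_z z`,
hence `AEE(X_RC) = AEE(X) = β₁ δ`. -/
theorem calibration_recovers_coefficients {Ω : Type*} [m0 : MeasurableSpace Ω]
    (μ : Measure Ω) [IsProbabilityMeasure μ]
    (Y X C XRC CRC zv Ust UC epsY : Ω → ℝ) (β0 β1 βC βz : ℝ)
    (hY : ∀ ω, Y ω = β0 + β1 * X ω + βC * C ω + βz * zv ω + epsY ω)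
    (hX : ∀ ω, X ω = XRC ω + Ust ω)
    (hC : ∀ ω, C ω = CRC ω + UC ω)
    (hmXRC : Measurable XRC) (hmCRC : Measurable CRC) (hmz : Measurable zv)
    (hInd : IndepFun (fun ω => (XRC ω, CRC ω, zv ω))
      (fun ω => (Ust ω, UC ω, epsY ω)) μ)
    (hUst : ∫ ω, Ust ω ∂μ = 0) (hUC : ∫ ω, UC ω ∂μ = 0)
    (hepsY : ∫ ω, epsY ω ∂μ = 0)
    (hintY : Integrable Y μ) (hintU : Integrable Ust μ)
    (hintUC : Integrable UC μ) (hinteps : Integrable epsY μ)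
    (hintXRC : Integrable XRC μ) (hintCRC : Integrable CRC μ)
    (hintz : Integrable zv μ) :
    (μ[Y | MeasurableSpace.comap (fun ω => (XRC ω, CRC ω, zv ω)) inferInstance]
      =ᵐ[μ] fun ω => β0 + β1 * XRC ω + βC * CRC ω + βz * zv ω)
    ∧ ∀ e δ c1 c2 : ℝ,
        (β0 + β1 * (e + δ) + βC * c1 + βz * c2)
          - (β0 + β1 * e + βC * c1 + βz * c2) = β1 * δ := by
  constructor
  · set g : Ω → ℝ × ℝ × ℝ := fun ω => (XRC ω, CRC ω, zv ω) with hg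
    have hmg : Measurable g := hmXRC.prodMk (hmCRC.prodMk hmz)
    have hle : MeasurableSpace.comap g inferInstance ≤ m0 := hmg.comap_le
    haveI : SigmaFinite (μ.trim hle) := (isFiniteMeasure_trim hle).toSigmaFinite
    set f : Ω → ℝ := fun ω => β0 + β1 * XRC ω + βC * CRC ω + βz * zv ω with hf
    set h : Ω → ℝ := fun ω => β1 * Ust ω + βC * UC ω + epsY ω with hh
    have hYfh : Y = fun ω => f ω + h ω := by
      funext ω; simp only [hf, hh]; rw [hY ω, hX ω, hC ω]; ring
    have hgm : Measurable[MeasurableSpace.comap g inferInstance] g :=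
      fun s hs => ⟨s, hs, rfl⟩
    have hfmG : StronglyMeasurable[MeasurableSpace.comap g inferInstance] f := by
      have h1 := measurable_fst.comp hgm
      have h2 := measurable_fst.comp (measurable_snd.comp hgm)
      have h3 := measurable_snd.comp (measurable_snd.comp hgm)
      exact (((@measurable_const ℝ Ω _ (MeasurableSpace.comap g inferInstance) β0).add
        (h1.const_mul β1)).add (h2.const_mul βC)).add (h3.const_mul βz)
        |>.stronglyMeasurable
    have hintf : Integrable f μ :=
      (((integrable_const β0).add (hintXRC.const_mul β1)).add
        (hintCRC.const_mul βC)).add (hintz.const_mul βz)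
    have hinth : Integrable h μ :=
      ((hintU.const_mul β1).add (hintUC.const_mul βC)).add hinteps
    have hcf : μ[f | MeasurableSpace.comap g inferInstance] =ᵐ[μ] f :=
      Filter.EventuallyEq.of_eq (condExp_of_stronglyMeasurable hle hfmG hintf)
    have hhint : ∫ ω, h ω ∂μ = 0 := by
      have hA : Integrable (fun ω => β1 * Ust ω + βC * UC ω) μ :=
        (hintU.const_mul β1).add (hintUC.const_mul βC)
      have hB : Integrable (fun ω => β1 * Ust ω) μ := hintU.const_mul β1
      have hD : Integrable (fun ω => βC * UC ω) μ := hintUC.const_mul βC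
      simp only [hh]
      rw [integral_add hA hinteps, integral_add hB hD,
        integral_const_mul, integral_const_mul, hUst, hUC, hepsY]
      ring
    have hφ : Measurable fun p : ℝ × ℝ × ℝ => β1 * p.1 + βC * p.2.1 + p.2.2 := by
      fun_prop
    have hIgh : IndepFun g h μ := hInd.comp measurable_id hφ
    have hch : (fun _ : Ω => (0 : ℝ)) =ᵐ[μ] μ[h | MeasurableSpace.comap g inferInstance] := by
      refine ae_eq_condExp_of_forall_setIntegral_eq hle hinth
        (fun s _ _ => (integrable_const 0).integrableOn)
        (fun s hs _ => ?_)
        stronglyMeasurable_const.aestronglyMeasurable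
      obtain ⟨t, ht, rfl⟩ := hs
      have hindmeas : Measurable (t.indicator (fun _ : ℝ × ℝ × ℝ => (1 : ℝ))) :=
        measurable_const.indicator ht
      have hIih : IndepFun (fun ω => t.indicator (fun _ => (1:ℝ)) (g ω)) h μ :=
        hIgh.comp hindmeas measurable_id
      have hm1 : AEStronglyMeasurable (fun ω => t.indicator (fun _ => (1:ℝ)) (g ω)) μ :=
        (hindmeas.comp hmg).aestronglyMeasurable
      have key : ∫ ω, t.indicator (fun _ => (1:ℝ)) (g ω) * h ω ∂μ
          = (∫ ω, t.indicator (fun _ => (1:ℝ)) (g ω) ∂μ) * ∫ ω, h ω ∂μ :=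
        hIih.integral_mul_eq_mul_integral hm1 hinth.aestronglyMeasurable
      have hset : ∫ ω, t.indicator (fun _ => (1:ℝ)) (g ω) * h ω ∂μ
          = ∫ ω in g ⁻¹' t, h ω ∂μ := by
        rw [← integral_indicator (hmg ht)]
        congr 1
        funext ω
        by_cases hω : g ω ∈ t <;>
          simp [Set.indicator_of_mem, Set.indicator_of_notMem, hω]
      simp [← hset, key, hhint]
    have hadd : μ[Y | MeasurableSpace.comap g inferInstance]
        =ᵐ[μ] μ[f | MeasurableSpace.comap g inferInstance]
          + μ[h | MeasurableSpace.comap g inferInstance] := by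
      rw [hYfh]
      exact condExp_add hintf hinth _
    calc μ[Y | MeasurableSpace.comap g inferInstance]
        =ᵐ[μ] μ[f | MeasurableSpace.comap g inferInstance]
          + μ[h | MeasurableSpace.comap g inferInstance] := hadd
      _ =ᵐ[μ] f + fun _ => (0:ℝ) := hcf.add hch.symm
      _ = f := by funext ω; simp
  · intro e δ c1 c2; ring
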